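/- arXiv:1307.0743 — 5 statements merged into one kernel-verified Lean document; each statement's English description precedes it below -/
import Mathlib

section
/- Let q be a rational prime, let K be a number field containing a primitive q-th root of unity, let x, b, c ∈ K and a prime 𝔭_K of K satisfy the hypotheses: 𝔭_K does not divide q; ord_{𝔭_K}(c) = 0 and the image of c in the residue field of 𝔭_K is not a q-th power; ord_{𝔭_K}(x) < 0; ord_{𝔭_K}(b) is not divisible by q; q·ord_{𝔭_K}(x) < (q−1)·ord_{𝔭_K}(b); and let L = K(α, β, γ) with α^q = 1 + x⁻¹, β^q = 1 + (bx^q + b^q)⁻¹, γ^q = 1 + (c + c⁻¹)x⁻¹. Then for every prime 𝔞_L of L that does not divide q and satisfies ord_{𝔞_L}(x) ≥ 0, all three of ord_{𝔞_L}(c), ord_{𝔞_L}(bx^q + b^q), and ord_{𝔞_L}(x) are divisible by q. -/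
open IsDedekindDomain NumberField

open scoped Classical in
/-- The `v`-adic order (additive valuation) of a nonzero element `x` of a number field `K`,
with junk value `0` at `x = 0`. -/
noncomputable def ordv {K : Type*} [Field K] [NumberField K]
    (v : HeightOneSpectrum (𝓞 K)) (x : K) : ℤ :=
  if h : x = 0 then 0
  else - Multiplicative.toAdd (WithZero.unzero ((v.valuation K).ne_zero_iff.mpr h))

/-- `c` (assumed to have `v`-adic order `0`) is a `q`-th power modulo the prime `v`, i.e. the
image of `c` in the residue field of `v` is a `q`-th power. -/
def IsQthPowerResidue {K : Type*} [Field K] [NumberField K] (q : ℕ)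
    (v : HeightOneSpectrum (𝓞 K)) (c : K) : Prop :=
  ∃ z : 𝓞 K, c = (algebraMap (𝓞 K) K z) ^ q ∨ 0 < ordv v (c - (algebraMap (𝓞 K) K z) ^ q)

section Helpers

variable {K : Type*} [Field K] [NumberField K] (v : HeightOneSpectrum (𝓞 K))

lemma ordv_spec {x : K} (h : x ≠ 0) :
    v.valuation K x =
      ((Multiplicative.ofAdd (-ordv v x) : Multiplicative ℤ) : WithZero (Multiplicative ℤ)) := by
  rw [ordv, dif_neg h, neg_neg, ofAdd_toAdd, WithZero.coe_unzero]

lemma ordv_eq_of_val {x : K} (h : x ≠ 0) {m : ℤ}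
    (hv : v.valuation K x =
      ((Multiplicative.ofAdd (-m) : Multiplicative ℤ) : WithZero (Multiplicative ℤ))) :
    ordv v x = m := by
  have := (ordv_spec v h).symm.trans hv
  rw [WithZero.coe_inj] at this
  have := Multiplicative.ofAdd.injective this
  linarith

lemma ordv_one : ordv v (1 : K) = 0 :=
  ordv_eq_of_val v one_ne_zero (by simp)

lemma ordv_mul {x y : K} (hx : x ≠ 0) (hy : y ≠ 0) :
    ordv v (x * y) = ordv v x + ordv v y := by
  apply ordv_eq_of_val v (mul_ne_zero hx hy)
  rw [map_mul, ordv_spec v hx, ordv_spec v hy, ← WithZero.coe_mul, ← ofAdd_add]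
  ring_nf

lemma ordv_inv {x : K} (hx : x ≠ 0) : ordv v x⁻¹ = - ordv v x := by
  apply ordv_eq_of_val v (inv_ne_zero hx)
  rw [map_inv₀, ordv_spec v hx, ← WithZero.coe_inv, ← ofAdd_neg, neg_neg]

lemma ordv_pow {x : K} (hx : x ≠ 0) (n : ℕ) : ordv v (x ^ n) = n * ordv v x := by
  induction n with
  | zero => simpa using ordv_one v
  | succ k ih =>
      rw [pow_succ, ordv_mul v (pow_ne_zero k hx) hx, ih]
      push_cast; ring

lemma val_lt_val {x y : K} (hx : x ≠ 0) (hy : y ≠ 0) (h : ordv v x < ordv v y) :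
    v.valuation K y < v.valuation K x := by
  rw [ordv_spec v hx, ordv_spec v hy, WithZero.coe_lt_coe, Multiplicative.ofAdd_lt]
  omega

lemma ordv_add_eq_left {x y : K} (hx : x ≠ 0) (hy : y ≠ 0) (h : ordv v x < ordv v y) :
    x + y ≠ 0 ∧ ordv v (x + y) = ordv v x := by
  have hlt := val_lt_val v hx hy h
  have hmax : v.valuation K (x + y) = v.valuation K x := by
    rw [Valuation.map_add_of_distinct_val (v.valuation K) hlt.ne', max_eq_left hlt.le]
  have hne : x + y ≠ 0 := by
    intro h0
    rw [h0, map_zero] at hmax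
    exact hx ((v.valuation K).zero_iff.mp hmax.symm)
  exact ⟨hne, ordv_eq_of_val v hne (hmax.trans (ordv_spec v hx))⟩

lemma ordv_add_eq_right {x y : K} (hx : x ≠ 0) (hy : y ≠ 0) (h : ordv v y < ordv v x) :
    x + y ≠ 0 ∧ ordv v (x + y) = ordv v y := by
  rw [add_comm]; exact ordv_add_eq_left v hy hx h

lemma ordv_nonneg_iff {x : K} (hx : x ≠ 0) : 0 ≤ ordv v x ↔ v.valuation K x ≤ 1 := by
  rw [ordv_spec v hx, ← WithZero.coe_one, WithZero.coe_le_coe, ← ofAdd_zero,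
    Multiplicative.ofAdd_le]
  omega

lemma ordv_add_nonneg {x y : K} (hx : x ≠ 0) (hy : y ≠ 0) (hxy : x + y ≠ 0)
    (ha : 0 ≤ ordv v x) (hb : 0 ≤ ordv v y) : 0 ≤ ordv v (x + y) := by
  rw [ordv_nonneg_iff v hxy]
  calc v.valuation K (x + y) ≤ max (v.valuation K x) (v.valuation K y) := (v.valuation K).map_add x y
    _ ≤ 1 := max_le ((ordv_nonneg_iff v hx).mp ha) ((ordv_nonneg_iff v hy).mp hb)

end Helpers

/-- Proposition: with `L = K(α, β, γ)` where `α^q = 1 + x⁻¹`,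
`β^q = 1 + (bx^q + b^q)⁻¹`, `γ^q = 1 + (c + c⁻¹)x⁻¹`, and with `x, b, c` and the prime `𝔭`
of `K` as in the previous proposition, every prime `𝔞` of `L` not dividing `q` at which `x`
is integral satisfies: `ord_𝔞 c`, `ord_𝔞 (bx^q + b^q)` and `ord_𝔞 x` are all divisible
by `q`. -/
theorem orders_divisible_by_q_away_from_poles_of_x
    (q : ℕ) (hq : q.Prime)
    (K : Type*) [Field K] [NumberField K] (hzeta : ∃ ζ : K, IsPrimitiveRoot ζ q)
    (x b c : K) (hx : x ≠ 0) (hb : b ≠ 0) (hc : c ≠ 0) (hbx : b * x ^ q + b ^ q ≠ 0)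
    (L : Type*) [Field L] [NumberField L] [Algebra K L] (α β γ : L)
    (hα : α ^ q = algebraMap K L (1 + x⁻¹))
    (hβ : β ^ q = algebraMap K L (1 + (b * x ^ q + b ^ q)⁻¹))
    (hγ : γ ^ q = algebraMap K L (1 + (c + c⁻¹) * x⁻¹))
    (hgen : IntermediateField.adjoin K ({α, β, γ} : Set L) = ⊤)
    (𝔭 : HeightOneSpectrum (𝓞 K))
    (h1 : (q : 𝓞 K) ∉ 𝔭.asIdeal)
    (h2 : ordv 𝔭 c = 0 ∧ ¬ IsQthPowerResidue q 𝔭 c)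
    (h3 : ordv 𝔭 x < 0)
    (h4 : ¬ (q : ℤ) ∣ ordv 𝔭 b)
    (h5 : (q : ℤ) * ordv 𝔭 x < (q - 1 : ℤ) * ordv 𝔭 b) :
    ∀ 𝔞 : HeightOneSpectrum (𝓞 L),
      (q : 𝓞 L) ∉ 𝔞.asIdeal → 0 ≤ ordv 𝔞 (algebraMap K L x) →
        (q : ℤ) ∣ ordv 𝔞 (algebraMap K L c) ∧
        (q : ℤ) ∣ ordv 𝔞 (algebraMap K L (b * x ^ q + b ^ q)) ∧
        (q : ℤ) ∣ ordv 𝔞 (algebraMap K L x) := by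
  intro 𝔞 _ hxnn
  have hq2 : 2 ≤ q := hq.two_le
  have hq0 : q ≠ 0 := by omega
  have hinj := (algebraMap K L).injective
  set X := algebraMap K L x with hXdef
  set B := algebraMap K L b with hBdef
  set C := algebraMap K L c with hCdef
  have hX : X ≠ 0 := by simpa [hXdef] using hinj.ne hx
  have hB : B ≠ 0 := by simpa [hBdef] using hinj.ne hb
  have hC : C ≠ 0 := by simpa [hCdef] using hinj.ne hc
  have hTmap : algebraMap K L (b * x ^ q + b ^ q) = B * X ^ q + B ^ q := by
    simp [hXdef, hBdef, map_add, map_mul, map_pow]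
  set T : L := B * X ^ q + B ^ q with hTdef
  have hT : T ≠ 0 := by
    rw [← hTmap]
    simpa using hinj.ne hbx
  have hα' : α ^ q = 1 + X⁻¹ := by rw [hα, map_add, map_one, map_inv₀]
  have hβ' : β ^ q = 1 + T⁻¹ := by rw [hβ, map_add, map_one, map_inv₀, hTmap]
  have hγ' : γ ^ q = 1 + (C + C⁻¹) * X⁻¹ := by
    rw [hγ, map_add, map_one, map_mul, map_add, map_inv₀, map_inv₀]
  set n := ordv 𝔞 X with hndef
  set m := ordv 𝔞 B with hmdef
  set k := ordv 𝔞 C with hkdef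
  -- Step 1 : q ∣ n
  have step1 : (q : ℤ) ∣ n := by
    rcases hxnn.eq_or_lt with h0 | hpos
    · exact h0 ▸ dvd_zero _
    · have hXinv : ordv 𝔞 X⁻¹ = -n := ordv_inv 𝔞 hX
      obtain ⟨hne, heq⟩ := ordv_add_eq_right 𝔞 (x := (1 : L)) (y := X⁻¹) one_ne_zero
        (inv_ne_zero hX) (by rw [ordv_one, hXinv]; omega)
      have hαne : α ≠ 0 := by
        intro h0
        rw [h0, zero_pow hq0] at hα'
        exact hne hα'.symm
      have hpow := ordv_pow 𝔞 hαne q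
      rw [hα', heq, hXinv] at hpow
      exact ⟨-ordv 𝔞 α, by linarith⟩
  -- Step 2 : q ∣ ordv 𝔞 T
  have step2 : (q : ℤ) ∣ ordv 𝔞 T := by
    have hBXq : B * X ^ q ≠ 0 := mul_ne_zero hB (pow_ne_zero _ hX)
    have hBq : (B : L) ^ q ≠ 0 := pow_ne_zero _ hB
    have h_ord_BXq : ordv 𝔞 (B * X ^ q) = m + q * n := by
      rw [ordv_mul 𝔞 hB (pow_ne_zero _ hX), ordv_pow 𝔞 hX]
    have h_ord_Bq : ordv 𝔞 (B ^ q) = q * m := ordv_pow 𝔞 hB q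
    rcases lt_or_ge m 0 with hm | hm
    · -- ordv T = q * m
      have hlt : ordv 𝔞 (B ^ q) < ordv 𝔞 (B * X ^ q) := by
        rw [h_ord_BXq, h_ord_Bq]
        have : ((q : ℤ) - 1) * m < 0 :=
          mul_neg_of_pos_of_neg (by push_cast; omega) hm
        nlinarith
      obtain ⟨_, heq⟩ := ordv_add_eq_right 𝔞 hBXq hBq hlt
      rw [← hTdef] at heq
      exact ⟨m, by rw [heq, h_ord_Bq]⟩
    · have hTnn : 0 ≤ ordv 𝔞 T := by
        have := ordv_add_nonneg 𝔞 hBXq hBq (hTdef ▸ hT)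
          (by rw [h_ord_BXq]; positivity) (by rw [h_ord_Bq]; positivity)
        rwa [← hTdef] at this
      rcases hTnn.eq_or_lt with h0 | hpos
      · exact h0 ▸ dvd_zero _
      · have hTinv : ordv 𝔞 T⁻¹ = -ordv 𝔞 T := ordv_inv 𝔞 hT
        obtain ⟨hne, heq⟩ := ordv_add_eq_right 𝔞 (x := (1 : L)) (y := T⁻¹) one_ne_zero
          (inv_ne_zero hT) (by rw [ordv_one, hTinv]; omega)
        have hβne : β ≠ 0 := by
          intro h0
          rw [h0, zero_pow hq0] at hβ'
          exact hne hβ'.symm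
        have hpow := ordv_pow 𝔞 hβne q
        rw [hβ', heq, hTinv] at hpow
        exact ⟨-ordv 𝔞 β, by linarith⟩
  -- Step 3 : q ∣ k
  have step3 : (q : ℤ) ∣ k := by
    rcases eq_or_ne k 0 with h0 | hk
    · exact h0 ▸ dvd_zero _
    · have hCinv : ordv 𝔞 C⁻¹ = -k := ordv_inv 𝔞 hC
      obtain ⟨j, hj0, hjk, hCC, hCCord⟩ :
          ∃ j : ℤ, j < 0 ∧ (j = k ∨ j = -k) ∧ C + C⁻¹ ≠ 0 ∧ ordv 𝔞 (C + C⁻¹) = j := by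
        rcases lt_or_gt_of_ne hk with hneg | hpos
        · obtain ⟨hne, heq⟩ := ordv_add_eq_left 𝔞 hC (inv_ne_zero hC)
            (by rw [hCinv]; omega)
          exact ⟨k, hneg, Or.inl rfl, hne, heq⟩
        · obtain ⟨hne, heq⟩ := ordv_add_eq_right 𝔞 hC (inv_ne_zero hC)
            (by rw [hCinv]; omega)
          exact ⟨-k, by omega, Or.inr rfl, hne, by rw [heq, hCinv]⟩
      set S : L := (C + C⁻¹) * X⁻¹ with hSdef
      have hS : S ≠ 0 := mul_ne_zero hCC (inv_ne_zero hX)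
      have hSord : ordv 𝔞 S = j - n := by
        rw [hSdef, ordv_mul 𝔞 hCC (inv_ne_zero hX), hCCord, ordv_inv 𝔞 hX]
        ring
      obtain ⟨hne, heq⟩ := ordv_add_eq_right 𝔞 (x := (1 : L)) (y := S) one_ne_zero hS
        (by rw [ordv_one, hSord]; omega)
      have hγne : γ ≠ 0 := by
        intro h0
        rw [h0, zero_pow hq0] at hγ'
        exact hne hγ'.symm
      have hpow := ordv_pow 𝔞 hγne q
      rw [hγ', heq, hSord] at hpow
      -- j - n = q * ordv γ, q ∣ n ⇒ q ∣ j ⇒ q ∣ k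
      have hqj : (q : ℤ) ∣ j := by
        obtain ⟨e, he⟩ := step1
        exact ⟨ordv 𝔞 γ + e, by linarith⟩
      rcases hjk with h | h
      · exact h ▸ hqj
      · exact (dvd_neg.mp (h ▸ hqj))
  exact ⟨step3, by rwa [hTmap], step1⟩
end

section
/- Let F/U be a cyclic extension of number fields with degree [F : U] divisible by q^m for a rational prime q and integer m ≥ 1, and let N be the unique intermediate field U ⊆ N ⊆ F with [N : U] = q^m. Let 𝔭_F be a prime of F lying above the prime 𝔭_U = 𝔭_F ∩ U of U, unramified over 𝔭_U, and let σ ∈ Gal(F/U) be the Frobenius automorphism of 𝔭_F, i.e. a generator of the decomposition group (the stabilizer of 𝔭_F under the Galois action) of 𝔭_F over U. If σ is not a q-th power in Gal(F/U), then 𝔭_U does not split in N/U, i.e. there is exactly one prime of N lying above 𝔭_U. -/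
open IsDedekindDomain NumberField

private lemma aux_group' {G H : Type*} [Group G] [Fintype G] [IsCyclic G] [Group H] [Fintype H]
    (f : G →* H) (hf : Function.Surjective f) {q m : ℕ} (hq : q.Prime) (hm : 1 ≤ m)
    (hdvd : q ^ m ∣ Fintype.card G) (hH : Fintype.card H = q ^ m)
    (σ : G) (hσ : ¬ ∃ τ : G, τ ^ q = σ) :
    Subgroup.zpowers (f σ) = ⊤ := by
  obtain ⟨g, hg⟩ := IsCyclic.exists_generator (α := G)
  have hn : orderOf g = Fintype.card G := by
    rw [← Nat.card_eq_fintype_card]; exact orderOf_eq_card_of_forall_mem_zpowers hg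
  obtain ⟨a, ha⟩ : ∃ a : ℕ, g ^ a = σ := by
    have h1 := hg σ
    rw [← mem_powers_iff_mem_zpowers] at h1
    exact h1
  have hqa : ¬ q ∣ a := by
    rintro ⟨b, rfl⟩
    exact hσ ⟨g ^ b, by rw [← pow_mul, mul_comm, ha]⟩
  have hOσ : orderOf σ = Fintype.card G / Nat.gcd (Fintype.card G) a := by
    rw [← ha, orderOf_pow, hn]
  have hd : Nat.gcd (Fintype.card G) a ∣ a := Nat.gcd_dvd_right _ _
  have hqd : ¬ q ∣ Nat.gcd (Fintype.card G) a := fun h => hqa (h.trans hd)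
  have hdn : Nat.gcd (Fintype.card G) a ∣ Fintype.card G := Nat.gcd_dvd_left _ _
  have hOmul : orderOf σ * Nat.gcd (Fintype.card G) a = Fintype.card G := by
    rw [hOσ, Nat.div_mul_cancel hdn]
  have hqmO : q ^ m ∣ orderOf σ := by
    have hcop : Nat.Coprime (q ^ m) (Nat.gcd (Fintype.card G) a) :=
      Nat.Coprime.pow_left m ((Nat.Prime.coprime_iff_not_dvd hq).mpr hqd)
    rw [← hOmul] at hdvd
    exact hcop.dvd_of_dvd_mul_right hdvd
  have hcard : orderOf (f σ) ∣ q ^ m := hH ▸ orderOf_dvd_card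
  obtain ⟨j, hj, hje⟩ := (Nat.dvd_prime_pow hq).mp hcard
  have hjm : j = m := by
    by_contra hne
    have hj' : j ≤ m - 1 := by omega
    have h1 : (f σ) ^ q ^ (m - 1) = 1 :=
      orderOf_dvd_iff_pow_eq_one.mp (hje ▸ pow_dvd_pow q hj')
    have hker : σ ^ q ^ (m - 1) ∈ f.ker := by
      rw [MonoidHom.mem_ker, map_pow, h1]
    have hqm1O : q ^ (m - 1) ∣ orderOf σ := (pow_dvd_pow q (by omega)).trans hqmO
    have hOx : orderOf (σ ^ q ^ (m - 1)) * q ^ (m - 1) = orderOf σ := by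
      rw [orderOf_pow, Nat.gcd_eq_right hqm1O, Nat.div_mul_cancel hqm1O]
    have hdvd_ker : orderOf (σ ^ q ^ (m - 1)) ∣ Nat.card f.ker :=
      Subgroup.orderOf_dvd_natCard f.ker hker
    have hkq : Nat.card f.ker * q ^ m = Fintype.card G := by
      have h3 := Subgroup.card_mul_index f.ker
      have h4 : f.ker.index = q ^ m := by
        rw [Subgroup.index_ker f, MonoidHom.range_eq_top.mpr hf, Subgroup.card_top,
          Nat.card_eq_fintype_card, hH]
      rw [h4] at h3
      simpa [Nat.card_eq_fintype_card] using h3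
    have h5 : orderOf σ * q ∣ Fintype.card G := by
      have h6 : orderOf (σ ^ q ^ (m - 1)) * q ^ m ∣ Nat.card f.ker * q ^ m :=
        mul_dvd_mul_right hdvd_ker _
      rw [hkq] at h6
      have h7 : orderOf (σ ^ q ^ (m - 1)) * q ^ m = orderOf σ * q := by
        have h8 : q ^ m = q ^ (m - 1) * q := by
          rw [← pow_succ]
          congr 1
          omega
        rw [h8, ← mul_assoc, hOx]
      rwa [h7] at h6
    have h8 : orderOf σ * q ∣ orderOf σ * Nat.gcd (Fintype.card G) a := by
      rw [← hOmul] at h5; exact h5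
    exact hqd ((mul_dvd_mul_iff_left (orderOf_pos σ).ne').mp h8)
  subst hjm
  apply Subgroup.eq_top_of_card_eq
  rw [Nat.card_zpowers, hje, ← hH, Nat.card_eq_fintype_card]

private lemma aux_trans' (U N : Type*) [Field U] [Field N] [NumberField U] [NumberField N]
    [Algebra U N] [IsGalois U N]
    (P Q : Ideal (𝓞 N)) (hP : P.IsMaximal) (hQ : Q.IsMaximal)
    (h : P.comap (algebraMap (𝓞 U) (𝓞 N)) = Q.comap (algebraMap (𝓞 U) (𝓞 N))) :
    ∃ ρ : N ≃ₐ[U] N, Q.comap (galRestrict (𝓞 U) U N (𝓞 N) ρ) = P := by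
  classical
  by_contra hcon
  push_neg at hcon
  have hQρ : ∀ ρ : N ≃ₐ[U] N, (Q.comap (galRestrict (𝓞 U) U N (𝓞 N) ρ)).IsMaximal := fun ρ =>
    Ideal.comap_isMaximal_of_surjective _ (galRestrict (𝓞 U) U N (𝓞 N) ρ).surjective
  have hnle : ∀ ρ : N ≃ₐ[U] N, ¬ P ≤ Q.comap (galRestrict (𝓞 U) U N (𝓞 N) ρ) := by
    intro ρ hle
    exact hcon ρ (hP.eq_of_le (hQρ ρ).ne_top hle).symm
  have hsub : ¬ ((P : Set (𝓞 N)) ⊆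
      ⋃ ρ ∈ ((Finset.univ : Finset (N ≃ₐ[U] N)) : Set (N ≃ₐ[U] N)),
        (Q.comap (galRestrict (𝓞 U) U N (𝓞 N) ρ) : Set (𝓞 N))) := by
    rw [Ideal.subset_union_prime 1 1 (fun ρ _ _ _ => (hQρ ρ).isPrime)]
    rintro ⟨ρ, -, hle⟩
    exact hnle ρ hle
  obtain ⟨x, hxP, hx⟩ := Set.not_subset.mp hsub
  have hx' : ∀ ρ : N ≃ₐ[U] N, galRestrict (𝓞 U) U N (𝓞 N) ρ x ∉ Q := by
    intro ρ hmem
    apply hx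
    refine Set.mem_biUnion (by simp : ρ ∈ ((Finset.univ : Finset (N ≃ₐ[U] N)) : Set (N ≃ₐ[U] N))) ?_
    simpa [Ideal.mem_comap] using hmem
  have hprod : (∏ ρ : N ≃ₐ[U] N, galRestrict (𝓞 U) U N (𝓞 N) ρ x) ∈ P := by
    rw [← Finset.mul_prod_erase Finset.univ _ (Finset.mem_univ (1 : N ≃ₐ[U] N))]
    have h1 : galRestrict (𝓞 U) U N (𝓞 N) 1 x = x := by
      rw [map_one]
      rfl
    rw [h1]
    exact Ideal.mul_mem_right _ _ hxP
  have hprodQ : (∏ ρ : N ≃ₐ[U] N, galRestrict (𝓞 U) U N (𝓞 N) ρ x) ∈ Q := by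
    rw [prod_galRestrict_eq_norm] at hprod ⊢
    have h2 : _ ∈ P.comap (algebraMap (𝓞 U) (𝓞 N)) := hprod
    rw [h] at h2
    exact h2
  obtain ⟨ρ, -, hρ⟩ := (Ideal.IsPrime.prod_mem_iff (hp := hQ.isPrime)).mp hprodQ
  exact hx' ρ hρ


/-- Lemma: let `F/U` be a cyclic extension of number fields with `q^m ∣ [F : U]`, and let `N`
be the (unique) intermediate field with `[N : U] = q^m`. Let `𝔭_F` be a prime of `F`,
unramified over the prime `𝔭_U` of `U` below it, and let `σ` be the Frobenius automorphism
of `𝔭_F`, i.e. a generator of the decomposition group of `𝔭_F` over `U`. If `σ` is not a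
`q`-th power in `Gal(F/U)`, then there is exactly one prime of `N` above `𝔭_U`. -/
theorem not_split_in_N_of_frobenius_not_qth_power
    (q m : ℕ) (hq : q.Prime) (hm : 1 ≤ m)
    (U N F : Type*) [Field U] [Field N] [Field F]
    [NumberField U] [NumberField N] [NumberField F]
    [Algebra U N] [Algebra N F] [Algebra U F] [IsScalarTower U N F]
    [IsGalois U F] [IsCyclic (F ≃ₐ[U] F)]
    (hdeg : q ^ m ∣ Module.finrank U F)
    (hN : Module.finrank U N = q ^ m)
    (𝔭F : HeightOneSpectrum (𝓞 F))
    (hunram : Ideal.ramificationIdx'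
      (𝔭F.asIdeal.comap (algebraMap (𝓞 U) (𝓞 F))) 𝔭F.asIdeal = 1)
    (σ : F ≃ₐ[U] F)
    (hσfix : Ideal.comap (galRestrict (𝓞 U) U F (𝓞 F) σ) 𝔭F.asIdeal = 𝔭F.asIdeal)
    (hσgen : ∀ τ : F ≃ₐ[U] F,
      Ideal.comap (galRestrict (𝓞 U) U F (𝓞 F) τ) 𝔭F.asIdeal = 𝔭F.asIdeal →
        τ ∈ Subgroup.zpowers σ)
    (hnotpow : ¬ ∃ τ : F ≃ₐ[U] F, τ ^ q = σ) :
    ∃! w : HeightOneSpectrum (𝓞 N),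
      w.asIdeal.comap (algebraMap (𝓞 U) (𝓞 N)) =
        𝔭F.asIdeal.comap (algebraMap (𝓞 U) (𝓞 F)) := by
  classical
  -- `Gal(F/U)` is commutative
  have hcomm : ∀ a b : F ≃ₐ[U] F, a * b = b * a := by
    intro a b
    obtain ⟨g, hg⟩ := IsCyclic.exists_generator (α := F ≃ₐ[U] F)
    obtain ⟨i, hi⟩ := hg a
    obtain ⟨j, hj⟩ := hg b
    rw [← hi, ← hj, ← zpow_add, ← zpow_add, add_comm]
  -- `N/U` is Galois
  letI ψ : N →ₐ[U] F := IsScalarTower.toAlgHom U N F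
  haveI hnorm : (ψ.fieldRange.fixingSubgroup).Normal := by
    constructor
    intro x hx g
    rw [hcomm g x, mul_assoc, mul_inv_cancel, mul_one]
    exact hx
  haveI hgal' : IsGalois U ψ.fieldRange := by
    have heq : IntermediateField.fixedField ψ.fieldRange.fixingSubgroup = ψ.fieldRange :=
      IsGalois.fixedField_fixingSubgroup ψ.fieldRange
    exact heq ▸ IsGalois.of_fixedField_normal_subgroup ψ.fieldRange.fixingSubgroup
  letI e : N ≃ₐ[U] ψ.fieldRange :=
    (AlgEquiv.ofInjective ψ ψ.toRingHom.injective).trans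
      (Subalgebra.equivOfEq _ _ (ψ.fieldRange_toSubalgebra).symm)
  haveI hgalN : IsGalois U N := IsGalois.of_algEquiv e.symm
  -- the restriction homomorphism and its image generating `Gal(N/U)`
  let res : (F ≃ₐ[U] F) →* (N ≃ₐ[U] N) := AlgEquiv.restrictNormalHom N
  have hsurj : Function.Surjective res := AlgEquiv.restrictNormalHom_surjective F
  have htop : Subgroup.zpowers (res σ) = ⊤ := by
    apply aux_group' res hsurj hq hm ?_ ?_ σ hnotpow
    · rw [← Nat.card_eq_fintype_card, IsGalois.card_aut_eq_finrank]; exact hdeg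
    · rw [← Nat.card_eq_fintype_card, IsGalois.card_aut_eq_finrank, hN]
  -- the prime of N below 𝔭F
  set pN : Ideal (𝓞 N) := 𝔭F.asIdeal.comap (algebraMap (𝓞 N) (𝓞 F)) with hpNdef
  haveI hpFprime : 𝔭F.asIdeal.IsPrime := 𝔭F.isPrime
  haveI hpNprime : pN.IsPrime := Ideal.IsPrime.comap _
  have hpNne : pN ≠ ⊥ := by
    intro hbot
    obtain ⟨y, hy, hy0⟩ := Submodule.exists_mem_ne_zero_of_ne_bot 𝔭F.ne_bot
    have : y = 0 := by
      have hyint : IsIntegral (𝓞 N) y := Algebra.IsIntegral.isIntegral y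
      exact absurd hbot (Ideal.comap_ne_bot_of_integral_mem hy0 hy hyint)
    exact hy0 this
  -- pN lies over 𝔭U
  have hpNU : pN.comap (algebraMap (𝓞 U) (𝓞 N)) =
      𝔭F.asIdeal.comap (algebraMap (𝓞 U) (𝓞 F)) := by
    rw [hpNdef, Ideal.comap_comap, ← IsScalarTower.algebraMap_eq (𝓞 U) (𝓞 N) (𝓞 F)]
  -- the commuting square for galRestrict and restriction to N
  have hsquare : ∀ (τ : F ≃ₐ[U] F) (x : 𝓞 N),
      algebraMap (𝓞 N) (𝓞 F) (galRestrict (𝓞 U) U N (𝓞 N) (res τ) x) =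
        galRestrict (𝓞 U) U F (𝓞 F) τ (algebraMap (𝓞 N) (𝓞 F) x) := by
    intro τ x
    apply FaithfulSMul.algebraMap_injective (𝓞 F) F
    rw [← IsScalarTower.algebraMap_apply (𝓞 N) (𝓞 F) F,
      IsScalarTower.algebraMap_apply (𝓞 N) N F,
      algebraMap_galRestrict_apply,
      algebraMap_galRestrict_apply,
      ← IsScalarTower.algebraMap_apply (𝓞 N) (𝓞 F) F,
      IsScalarTower.algebraMap_apply (𝓞 N) N F]
    exact AlgEquiv.restrictNormal_commutes τ N (algebraMap (𝓞 N) N x)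
  -- comap of products/identity of automorphisms
  have hcomapmul : ∀ (e₁ e₂ : (𝓞 N) ≃ₐ[𝓞 U] (𝓞 N)) (I : Ideal (𝓞 N)),
      Ideal.comap (e₁ * e₂) I = Ideal.comap e₂ (Ideal.comap e₁ I) := by
    intro e₁ e₂ I
    ext x
    simp only [Ideal.mem_comap]
    rfl
  have hcomapone : ∀ I : Ideal (𝓞 N), Ideal.comap (1 : (𝓞 N) ≃ₐ[𝓞 U] (𝓞 N)) I = I := by
    intro I
    ext x
    simp only [Ideal.mem_comap]
    rfl
  -- the stabilizer of pN in Gal(N/U)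
  let S : Subgroup (N ≃ₐ[U] N) :=
  { carrier := {ρ | Ideal.comap (galRestrict (𝓞 U) U N (𝓞 N) ρ) pN = pN}
    one_mem' := by
      simp only [Set.mem_setOf_eq, map_one]
      exact hcomapone pN
    mul_mem' := by
      intro a b ha hb
      simp only [Set.mem_setOf_eq] at ha hb ⊢
      rw [map_mul, hcomapmul, ha, hb]
    inv_mem' := by
      intro a ha
      simp only [Set.mem_setOf_eq] at ha ⊢
      rw [map_inv]
      conv_lhs => rw [← ha]
      rw [← hcomapmul, mul_inv_cancel, hcomapone] }
  have hresS : res σ ∈ S := by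
    show Ideal.comap (galRestrict (𝓞 U) U N (𝓞 N) (res σ)) pN = pN
    ext x
    rw [Ideal.mem_comap, hpNdef, Ideal.mem_comap, Ideal.mem_comap, hsquare σ x,
      ← Ideal.mem_comap, hσfix]
  have hSall : ∀ ρ : N ≃ₐ[U] N, Ideal.comap (galRestrict (𝓞 U) U N (𝓞 N) ρ) pN = pN := by
    intro ρ
    have : ρ ∈ S := by
      have h1 : Subgroup.zpowers (res σ) ≤ S := by
        rw [Subgroup.zpowers_le]
        exact hresS
      rw [htop] at h1
      exact h1 (Subgroup.mem_top ρ)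
    exact this
  -- conclusion
  refine ⟨⟨pN, hpNprime, hpNne⟩, hpNU, ?_⟩
  intro w hw
  haveI hwmax : w.asIdeal.IsMaximal := Ideal.IsPrime.isMaximal w.isPrime w.ne_bot
  haveI hpNmax : pN.IsMaximal := Ideal.IsPrime.isMaximal hpNprime hpNne
  obtain ⟨ρ, hρ⟩ := aux_trans' U N w.asIdeal pN hwmax hpNmax (by rw [hw, hpNU])
  have : w.asIdeal = pN := by rw [← hρ, hSall ρ]
  exact HeightOneSpectrum.ext this
end

section
/- Let G be a number field, let H be a totally real number field with H/ℚ Galois with cyclic Galois group of 2-power order, let GH be the compositum of G and H inside a fixed algebraic closure of ℚ, and let Ĝ be a field with G ⊆ Ĝ ⊂ GH and [GH : Ĝ] = 2. Suppose GH = Ĝ(√a) for some nonzero a ∈ Ĝ. Then for every field embedding σ : Ĝ → ℝ one has σ(a) > 0. -/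
lemma aux_ext {F K : Type*} [Field F] [Field K] [Algebra F K] [Algebra.IsAlgebraic F K]
    (f : F →+* ℂ) : ∃ g : K →+* ℂ, g.comp (algebraMap F K) = f := by
  letI : Algebra F ℂ := f.toAlgebra
  refine ⟨(IsAlgClosed.lift : K →ₐ[F] ℂ).toRingHom, ?_⟩
  ext x
  simp only [RingHom.comp_apply, AlgHom.toRingHom_eq_coe, RingHom.coe_coe]
  rw [(IsAlgClosed.lift : K →ₐ[F] ℂ).commutes x]
  rfl


/-- Lemma: let `H` be a totally real cyclic extension of `ℚ` of `2`-power degree, `G` a number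
field, and `Ghat` a field with `G ⊆ Ghat ⊂ GH` and `[GH : Ghat] = 2` (all inside `ℂ`).
If `GH = Ghat(√a)` for some nonzero `a ∈ Ghat`, then `σ(a) > 0` for every real embedding
`σ : Ghat →+* ℝ`. -/
theorem generator_of_compositum_square_root_is_totally_positive
    (G H Ghat : IntermediateField ℚ ℂ)
    [FiniteDimensional ℚ G] [FiniteDimensional ℚ H] [FiniteDimensional ℚ Ghat]
    [IsGalois ℚ H] [IsCyclic (H ≃ₐ[ℚ] H)] (r : ℕ)
    (hdegH : Module.finrank ℚ H = 2 ^ r)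
    (htotreal : ∀ σ : H →+* ℂ, ∀ x : H, (σ x).im = 0)
    (hGGhat : G ≤ Ghat) (hle : Ghat ≤ G ⊔ H)
    (hdeg2 : Module.finrank Ghat (IntermediateField.extendScalars hle) = 2)
    (a : Ghat) (ha : a ≠ 0) (s : ℂ) (hs : s ^ 2 = algebraMap Ghat ℂ a)
    (hgen : IntermediateField.extendScalars hle =
      IntermediateField.adjoin Ghat ({s} : Set ℂ)) :
    ∀ σ : Ghat →+* ℝ, 0 < σ a := by
  intro σ
  set K := IntermediateField.extendScalars hle with hK
  haveI : FiniteDimensional Ghat K := .of_finrank_pos (by rw [hdeg2]; norm_num)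
  haveI : Algebra.IsAlgebraic Ghat K := Algebra.IsAlgebraic.of_finite _ _
  obtain ⟨τ, hτ⟩ := aux_ext (K := K) ((Complex.ofRealHom : ℝ →+* ℂ).comp σ)
  have hsK : s ∈ K := by
    rw [hgen]; exact IntermediateField.subset_adjoin _ _ (Set.mem_singleton s)
  set y : K := ⟨s, hsK⟩ with hy
  -- the subfield of K mapped to reals
  set T : Subfield K := (Complex.ofRealHom.fieldRange).comap τ with hT
  set E : Subfield ℂ := T.map K.val.toRingHom with hE
  have hQ : ∀ x : ℚ, algebraMap ℚ ℂ x ∈ E := by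
    intro x
    have : algebraMap ℚ ℂ x = (x : ℂ) := by simp
    rw [this]
    exact SubfieldClass.ratCast_mem E x
  set E' : IntermediateField ℚ ℂ := E.toIntermediateField hQ with hE'
  have hmemE : ∀ z : K, (τ z).im = 0 → (z : ℂ) ∈ E := by
    intro z hz
    refine ⟨z, ?_, rfl⟩
    exact ⟨(τ z).re, Complex.ext (by simp) (by simp [hz])⟩
  -- Ghat ≤ E'
  have hGhatE : Ghat ≤ E' := by
    intro x hx
    have hx' : x ∈ K := hle hx
    have heq : (⟨x, hx'⟩ : K) = algebraMap Ghat K ⟨x, hx⟩ := rfl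
    have : (τ ⟨x, hx'⟩).im = 0 := by
      rw [heq, ← RingHom.comp_apply, hτ]
      simp
    exact hmemE ⟨x, hx'⟩ this
  -- H ≤ E'
  have hHK : ∀ z : H, (z : ℂ) ∈ K := fun z =>
    (le_sup_right : H ≤ G ⊔ H) z.2
  have hHE : H ≤ E' := by
    intro x hx
    have hsub : H.toSubfield ≤ K.toSubfield := fun z hz =>
      (le_sup_right : H ≤ G ⊔ H) hz
    let ρ : H →+* ℂ := τ.comp (Subfield.inclusion hsub)
    have := htotreal ρ ⟨x, hx⟩
    exact hmemE ⟨x, hHK ⟨x, hx⟩⟩ this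
  -- compositum inside E'
  have hsup : G ⊔ H ≤ E' := sup_le (le_trans hGGhat hGhatE) hHE
  have hsE : s ∈ E := hsup hsK
  obtain ⟨y', hy'T, hy'eq⟩ := hsE
  have hyy : y' = y := Subtype.ext hy'eq
  rw [hyy] at hy'T
  obtain ⟨t, ht⟩ := hy'T
  -- square relation
  have hsq : y ^ 2 = algebraMap Ghat K a := by
    apply Subtype.ext
    push_cast
    exact hs
  have h2 : (τ y) ^ 2 = ((σ a : ℝ) : ℂ) := by
    rw [← map_pow, hsq, ← RingHom.comp_apply, hτ]
    rfl
  have ht2 : ((t : ℂ)) ^ 2 = ((σ a : ℝ) : ℂ) := by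
    rw [show ((t : ℂ)) = τ y from ht]; exact h2
  have ht2' : t ^ 2 = σ a := by
    exact_mod_cast ht2
  have htne : t ≠ 0 := by
    intro h0
    rw [h0] at ht2'
    have : σ a = 0 := by simpa using ht2'.symm
    exact ha (σ.injective (by rw [map_zero]; exact this))
  rw [← ht2']
  positivity
end

section
/- Let q be a rational prime, let K_∞ be an infinite algebraic extension of ℚ, let G ⊆ K_∞ be a number field, and fix a field path from G to K_∞, i.e. an increasing chain G = M_0 ⊆ M_1 ⊆ M_2 ⊆ ⋯ of number fields whose union is K_∞. Let 𝔭_G be a prime of G. Then 𝔭_G is q-bounded in K_∞ if and only if there exists a q-bounded path through the tree of factors of 𝔭_G along this field path, i.e. a sequence of primes 𝔭_{M_0} = 𝔭_G, 𝔭_{M_1}, 𝔭_{M_2}, … with 𝔭_{M_{j+1}} ∩ M_j = 𝔭_{M_j} for all j, and an index i such that ord_q(d(𝔭_{M_j}/𝔭_G)) = ord_q(d(𝔭_{M_i}/𝔭_G)) for all j ≥ i. -/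
open NumberField

section Defs

variable {Kinf : Type*} [Field Kinf] [Algebra ℚ Kinf]

/-- The ring homomorphism between rings of integers induced by an inclusion of
intermediate fields. -/
noncomputable def oMap {E F : IntermediateField ℚ Kinf} (h : E ≤ F) :
    𝓞 E →+* 𝓞 F :=
  RingOfIntegers.mapRingHom (IntermediateField.inclusion h)

/-- `P` (a prime of `F`) lies above `p` (a prime of `E`). -/
def LiesAbove {E F : IntermediateField ℚ Kinf} (h : E ≤ F)
    (P : Ideal (𝓞 F)) (p : Ideal (𝓞 E)) : Prop :=
  Ideal.comap (oMap h) P = p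

/-- `p` is a (nonzero) prime of the ring of integers of `E`. -/
def IsPrimeOf (E : IntermediateField ℚ Kinf) (p : Ideal (𝓞 E)) : Prop :=
  p.IsPrime ∧ p ≠ ⊥

/-- The local degree `d(P/p) = e(P/p)·f(P/p)`. -/
noncomputable def locDeg {E F : IntermediateField ℚ Kinf} (h : E ≤ F)
    (p : Ideal (𝓞 E)) (P : Ideal (𝓞 F)) : ℕ :=
  letI : Algebra (𝓞 E) (𝓞 F) := (oMap h).toAlgebra
  Ideal.ramificationIdx' p P * Ideal.inertiaDeg' p P

/-- The prime `pG` of the number field `G ⊆ Kinf` is `q`-unbounded in `Kinf`: for every number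
field `M` with `G ⊆ M ⊆ Kinf` there is a number field `K` with `M ⊆ K ⊆ Kinf` such that `q`
divides the local degree `d(pK/pM)` for every prime `pM` of `M` above `pG` and every prime
`pK` of `K` above `pM`. -/
def QUnbounded (q : ℕ) (G : IntermediateField ℚ Kinf) (pG : Ideal (𝓞 G)) : Prop :=
  ∀ M : IntermediateField ℚ Kinf, ∀ hGM : G ≤ M, FiniteDimensional ℚ M →
    ∃ (K : IntermediateField ℚ Kinf) (hMK : M ≤ K), FiniteDimensional ℚ K ∧
      ∀ pM : Ideal (𝓞 M), IsPrimeOf M pM → LiesAbove hGM pM pG →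
        ∀ pK : Ideal (𝓞 K), IsPrimeOf K pK → LiesAbove hMK pK pM →
          q ∣ locDeg hMK pM pK

end Defs

section Aux

variable {Kinf : Type*} [Field Kinf] [Algebra ℚ Kinf]

theorem QB.nf (E : IntermediateField ℚ Kinf) [FiniteDimensional ℚ E] : NumberField E := by
  haveI : CharZero E := charZero_of_injective_algebraMap (algebraMap ℚ E).injective
  have key : ∀ (a b : Module ℚ ↥E), @FiniteDimensional ℚ ↥E _ _ a →
      @FiniteDimensional ℚ ↥E _ _ b := by
    intro a b hfin
    rwa [Subsingleton.elim a b] at hfin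
  exact @NumberField.mk ↥E _ ‹_› (key _ _ ‹_›)

theorem QB.oMap_injective {E F : IntermediateField ℚ Kinf} (h : E ≤ F) :
    Function.Injective (oMap h) := by
  intro x y hxy
  have h2 : (((x : E) : Kinf)) = (((y : E)) : Kinf) :=
    congrArg (fun z : 𝓞 F => ((z : F) : Kinf)) hxy
  exact RingOfIntegers.ext (Subtype.ext h2)

theorem QB.map_oMap_ne_bot {E F : IntermediateField ℚ Kinf} (h : E ≤ F) {p : Ideal (𝓞 E)}
    (hp : p ≠ ⊥) : Ideal.map (oMap h) p ≠ ⊥ := by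
  obtain ⟨x, hx, hx0⟩ := Submodule.exists_mem_ne_zero_of_ne_bot hp
  rw [Submodule.ne_bot_iff]
  exact ⟨oMap h x, Ideal.mem_map_of_mem _ hx,
    fun hc => hx0 (QB.oMap_injective h (by simpa using hc))⟩

theorem QB.oMap_id (E : IntermediateField ℚ Kinf) (h : E ≤ E) :
    oMap h = RingHom.id (𝓞 E) := by
  ext x; rfl

theorem QB.oMap_comp {E F G : IntermediateField ℚ Kinf} (h1 : E ≤ F) (h2 : F ≤ G) :
    (oMap h2).comp (oMap h1) = oMap (h1.trans h2) := by
  ext x; rfl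

theorem QB.tower_aux {E F : IntermediateField ℚ Kinf} (h : E ≤ F) [FiniteDimensional ℚ F] :
    letI : Algebra (𝓞 E) (𝓞 F) := (oMap h).toAlgebra
    Algebra.IsIntegral (𝓞 E) (𝓞 F) ∧ Module.Finite (𝓞 E) (𝓞 F) := by
  haveI := QB.nf F
  letI : Algebra (𝓞 E) (𝓞 F) := (oMap h).toAlgebra
  haveI : IsScalarTower ℤ (𝓞 E) (𝓞 F) :=
    IsScalarTower.of_algebraMap_eq' (Subsingleton.elim _ _)
  constructor
  · exact Algebra.IsIntegral.tower_top (R := ℤ)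
  · exact Module.Finite.of_restrictScalars_finite ℤ (𝓞 E) (𝓞 F)

theorem QB.isMaximal_of_isPrimeOf {E : IntermediateField ℚ Kinf} [FiniteDimensional ℚ E]
    {p : Ideal (𝓞 E)} (hp : IsPrimeOf E p) : p.IsMaximal := by
  haveI := QB.nf E
  exact Ring.DimensionLEOne.maximalOfPrime hp.2 hp.1

theorem QB.comap_isPrimeOf {E F : IntermediateField ℚ Kinf} (h : E ≤ F) [FiniteDimensional ℚ F]
    {P : Ideal (𝓞 F)} (hP : IsPrimeOf F P) : IsPrimeOf E (Ideal.comap (oMap h) P) := by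
  haveI := QB.nf F
  letI : Algebra (𝓞 E) (𝓞 F) := (oMap h).toAlgebra
  haveI : IsScalarTower ℤ (𝓞 E) (𝓞 F) :=
    IsScalarTower.of_algebraMap_eq' (Subsingleton.elim _ _)
  obtain ⟨x, hx, hx0⟩ := Submodule.exists_mem_ne_zero_of_ne_bot hP.2
  haveI := hP.1
  refine ⟨Ideal.IsPrime.comap _, ?_⟩
  exact Ideal.comap_ne_bot_of_integral_mem hx0 hx
    (IsIntegral.tower_top (R := ℤ)
      (haveI : Algebra.IsIntegral ℤ (𝓞 F) := Algebra.IsIntegral.of_finite ℤ (𝓞 F)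
       Algebra.IsIntegral.isIntegral x))

theorem QB.locDeg_ne_zero {E F : IntermediateField ℚ Kinf} (h : E ≤ F)
    [FiniteDimensional ℚ E] [FiniteDimensional ℚ F]
    {p : Ideal (𝓞 E)} {P : Ideal (𝓞 F)} (hp : IsPrimeOf E p) (hP : IsPrimeOf F P)
    (hl : LiesAbove h P p) : locDeg h p P ≠ 0 := by
  haveI := QB.nf E; haveI := QB.nf F
  haveI := hp.1
  have hle : Ideal.map (oMap h) p ≤ P := Ideal.map_le_iff_le_comap.mpr hl.ge
  letI : Algebra (𝓞 E) (𝓞 F) := (oMap h).toAlgebra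
  have he : Ideal.ramificationIdx' p P ≠ 0 :=
    Ideal.IsDedekindDomain.ramificationIdx'_ne_zero (QB.map_oMap_ne_bot h hp.2) hP.1 hle
  haveI : Module.Finite (𝓞 E) (𝓞 F) := (QB.tower_aux h).2
  haveI : p.IsMaximal := QB.isMaximal_of_isPrimeOf hp
  haveI : P.IsPrime := hP.1
  haveI : P.LiesOver p := ⟨hl.symm⟩
  have hf : Ideal.inertiaDeg' p P ≠ 0 := by
    have : Ideal.inertiaDeg' p P ≠ 0 := (Ideal.inertiaDeg'_pos p P).ne'
    exact this
  exact mul_ne_zero he hf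

theorem QB.locDeg_mul {E F G : IntermediateField ℚ Kinf} (h1 : E ≤ F) (h2 : F ≤ G)
    [FiniteDimensional ℚ E] [FiniteDimensional ℚ F] [FiniteDimensional ℚ G]
    {p : Ideal (𝓞 E)} {P : Ideal (𝓞 F)} {Q : Ideal (𝓞 G)}
    (hp : IsPrimeOf E p) (hP : IsPrimeOf F P) (hQ : IsPrimeOf G Q)
    (l1 : LiesAbove h1 P p) (l2 : LiesAbove h2 Q P) :
    locDeg (h1.trans h2) p Q = locDeg h1 p P * locDeg h2 P Q := by
  haveI := QB.nf E; haveI := QB.nf F; haveI := QB.nf G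
  haveI := hP.1; haveI := hQ.1
  haveI : p.IsMaximal := QB.isMaximal_of_isPrimeOf hp
  haveI : P.IsMaximal := QB.isMaximal_of_isPrimeOf hP
  have hg0 : Ideal.map (oMap h2) P ≠ ⊥ := QB.map_oMap_ne_bot h2 hP.2
  have hfg : Ideal.map ((oMap h2).comp (oMap h1)) p ≠ ⊥ := by
    rw [QB.oMap_comp h1 h2]; exact QB.map_oMap_ne_bot _ hp.2
  have hg : Ideal.map (oMap h2) P ≤ Q := Ideal.map_le_iff_le_comap.mpr l2.ge
  letI i1 : Algebra (𝓞 E) (𝓞 F) := (oMap h1).toAlgebra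
  letI i2 : Algebra (𝓞 F) (𝓞 G) := (oMap h2).toAlgebra
  letI i3 : Algebra (𝓞 E) (𝓞 G) := (oMap (h1.trans h2)).toAlgebra
  haveI : IsScalarTower (𝓞 E) (𝓞 F) (𝓞 G) := IsScalarTower.of_algebraMap_eq (fun x => rfl)
  haveI : P.LiesOver p := ⟨l1.symm⟩
  haveI : Q.LiesOver P := ⟨l2.symm⟩
  rw [QB.oMap_comp h1 h2] at hfg
  have he : Ideal.ramificationIdx' p Q = Ideal.ramificationIdx' p P * Ideal.ramificationIdx' P Q :=
    Ideal.ramificationIdx'_algebra_tower hg0 hfg hg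
  have hf : Ideal.inertiaDeg' p Q = Ideal.inertiaDeg' p P * Ideal.inertiaDeg' P Q :=
    Ideal.inertiaDeg'_algebra_tower p P Q
  show Ideal.ramificationIdx' p Q * Ideal.inertiaDeg' p Q =
    (Ideal.ramificationIdx' p P * Ideal.inertiaDeg' p P) *
      (Ideal.ramificationIdx' P Q * Ideal.inertiaDeg' P Q)
  rw [he, hf]
  ring

theorem QB.liesAbove_refl {E : IntermediateField ℚ Kinf} (h : E ≤ E) (p : Ideal (𝓞 E)) :
    LiesAbove h p p := by
  show Ideal.comap _ _ = _
  rw [QB.oMap_id, Ideal.comap_id]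

theorem QB.liesAbove_trans {E F G : IntermediateField ℚ Kinf} {h1 : E ≤ F} {h2 : F ≤ G}
    {p : Ideal (𝓞 E)} {P : Ideal (𝓞 F)} {Q : Ideal (𝓞 G)}
    (l1 : LiesAbove h1 P p) (l2 : LiesAbove h2 Q P) : LiesAbove (h1.trans h2) Q p := by
  show Ideal.comap _ _ = _
  rw [← QB.oMap_comp h1 h2, ← Ideal.comap_comap]
  rw [show Ideal.comap (oMap h2) Q = P from l2]
  exact l1

theorem QB.locDeg_fact {E F G : IntermediateField ℚ Kinf} (h1 : E ≤ F) (h2 : F ≤ G)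
    [FiniteDimensional ℚ E] [FiniteDimensional ℚ F] [FiniteDimensional ℚ G]
    {p : Ideal (𝓞 E)} {P : Ideal (𝓞 F)} {Q : Ideal (𝓞 G)}
    (hp : IsPrimeOf E p) (hP : IsPrimeOf F P) (hQ : IsPrimeOf G Q)
    (l1 : LiesAbove h1 P p) (l2 : LiesAbove h2 Q P) (q : ℕ) :
    (locDeg (h1.trans h2) p Q).factorization q =
      (locDeg h1 p P).factorization q + (locDeg h2 P Q).factorization q := by
  rw [QB.locDeg_mul h1 h2 hp hP hQ l1 l2,
    Nat.factorization_mul (QB.locDeg_ne_zero h1 hp hP l1) (QB.locDeg_ne_zero h2 hP hQ l2)]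
  rfl

theorem QB.exists_liesAbove {E F : IntermediateField ℚ Kinf} (h : E ≤ F)
    [FiniteDimensional ℚ F] {p : Ideal (𝓞 E)} (hp : IsPrimeOf E p) :
    ∃ P : Ideal (𝓞 F), IsPrimeOf F P ∧ LiesAbove h P p := by
  haveI := QB.nf F
  letI : Algebra (𝓞 E) (𝓞 F) := (oMap h).toAlgebra
  haveI hint : Algebra.IsIntegral (𝓞 E) (𝓞 F) := (QB.tower_aux h).1
  haveI := hp.1
  have halg : algebraMap (𝓞 E) (𝓞 F) = oMap h := rfl
  have hker : RingHom.ker (algebraMap (𝓞 E) (𝓞 F)) ≤ p := by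
    rw [halg, (RingHom.injective_iff_ker_eq_bot _).mp (QB.oMap_injective h)]
    exact bot_le
  obtain ⟨Q, hQ, hQc⟩ := Ideal.exists_ideal_over_prime_of_isIntegral_of_isDomain p hker
  rw [halg] at hQc
  refine ⟨Q, ⟨hQ, ?_⟩, hQc⟩
  intro hbot
  rw [hbot, Ideal.comap_bot_of_injective _ (QB.oMap_injective h)] at hQc
  exact hp.2 hQc.symm

theorem QB.finite_setOf_liesAbove {E F : IntermediateField ℚ Kinf} (h : E ≤ F)
    [FiniteDimensional ℚ F] {p : Ideal (𝓞 E)} (hp : p ≠ ⊥) :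
    {P : Ideal (𝓞 F) | IsPrimeOf F P ∧ LiesAbove h P p}.Finite := by
  haveI := QB.nf F
  have hfin := Ideal.finite_factors (I := Ideal.map (oMap h) p) (QB.map_oMap_ne_bot h hp)
  refine Set.Finite.subset (hfin.image (fun v => v.asIdeal)) ?_
  rintro P ⟨⟨hP1, hP2⟩, hPc⟩
  refine ⟨⟨P, hP1, hP2⟩, ?_, rfl⟩
  simp only [Set.mem_setOf_eq]
  exact (Ideal.dvd_iff_le).mpr (Ideal.map_le_iff_le_comap.mpr hPc.ge)

theorem QB.exists_le_of_fd (M : ℕ → IntermediateField ℚ Kinf) (hmono : Monotone M)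
    (hunion : (⨆ j, M j) = ⊤) (K : IntermediateField ℚ Kinf) [FiniteDimensional ℚ K] :
    ∃ j, K ≤ M j := by
  have hdir : Directed (· ≤ ·) M := hmono.directed_le
  have hmem : ∀ x : Kinf, ∃ j, x ∈ M j := by
    intro x
    have h1 : x ∈ (↑(⨆ j, M j) : Set Kinf) := by rw [hunion]; trivial
    rw [IntermediateField.coe_iSup_of_directed hdir] at h1
    simpa using h1
  have key : ∀ (a b : Module ℚ ↥K), @FiniteDimensional ℚ ↥K _ _ a →
      @FiniteDimensional ℚ ↥K _ _ b := by
    intro a b hfin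
    rwa [Subsingleton.elim a b] at hfin
  letI : Algebra ℚ ↥K := K.algebra'
  haveI : FiniteDimensional ℚ ↥K := key _ _ ‹_›
  haveI : Algebra.IsIntegral ℚ ↥K := Algebra.IsIntegral.of_finite _ _
  obtain ⟨α, hα⟩ := Field.exists_primitive_element ℚ ↥K
  obtain ⟨N, hN⟩ := hmem (α : Kinf)
  refine ⟨N, fun z hz => ?_⟩
  have h2 : (⟨z, hz⟩ : ↥K) ∈ (IntermediateField.adjoin ℚ {α} : IntermediateField ℚ ↥K) := by
    rw [hα]; trivial
  have h3 : z ∈ (IntermediateField.adjoin ℚ ({α} : Set ↥K)).map K.val :=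
    ⟨⟨z, hz⟩, h2, rfl⟩
  rw [IntermediateField.adjoin_map] at h3
  have h4 : (IntermediateField.adjoin ℚ (K.val '' {α})) ≤ M N := by
    rw [IntermediateField.adjoin_le_iff]
    intro w hw
    simp only [Set.image_singleton, Set.mem_singleton_iff] at hw
    rw [hw]
    exact hN
  exact h4 h3

end Aux

open CategoryTheory Opposite

/-- Lemma: fix a field path `M 0 ⊆ M 1 ⊆ ⋯` from the number field `G = M 0` to the infinite
algebraic extension `Kinf` of `ℚ` (an increasing chain of number fields with union `Kinf`).
A prime `pG` of `G` is `q`-bounded in `Kinf` (i.e. not `q`-unbounded) if and only if there is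
a `q`-bounded path through the tree of factors of `pG` along this field path: a compatible
sequence of primes `P j` of `M j` starting at `pG` whose local degrees over `pG` have
eventually constant `q`-adic order. -/
theorem q_bounded_iff_exists_q_bounded_path
    (Kinf : Type*) [Field Kinf] [Algebra ℚ Kinf] [Algebra.IsAlgebraic ℚ Kinf]
    (hinf : ¬ FiniteDimensional ℚ Kinf)
    (q : ℕ) (hq : q.Prime)
    (M : ℕ → IntermediateField ℚ Kinf) (hmono : Monotone M)
    (hfd : ∀ j, FiniteDimensional ℚ (M j)) (hunion : (⨆ j, M j) = ⊤)
    (pG : Ideal (𝓞 (M 0))) (hpG : IsPrimeOf (M 0) pG) :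
    ¬ QUnbounded q (M 0) pG ↔
      ∃ P : (j : ℕ) → Ideal (𝓞 (M j)),
        P 0 = pG ∧
        (∀ j, IsPrimeOf (M j) (P j)) ∧
        (∀ j, LiesAbove (hmono (Nat.le_succ j)) (P (j + 1)) (P j)) ∧
        ∃ i, ∀ j, i ≤ j →
          (locDeg (hmono (Nat.zero_le j)) pG (P j)).factorization q =
            (locDeg (hmono (Nat.zero_le i)) pG (P i)).factorization q := by
  haveI := hfd 0
  constructor
  · -- q-bounded → path exists
    intro hnb
    unfold QUnbounded at hnb
    push_neg at hnb
    obtain ⟨M', hGM', hM'fd, hsel⟩ := hnb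
    haveI := hM'fd
    obtain ⟨i0, hM'le⟩ := QB.exists_le_of_fd M hmono hunion M'
    set sPrimes : Set (Ideal (𝓞 M')) := {pM | IsPrimeOf M' pM ∧ LiesAbove hGM' pM pG}
      with hsPrimes
    have hfinP : sPrimes.Finite := QB.finite_setOf_liesAbove hGM' hpG.2
    set C : ℕ := sSup ((fun pM => (locDeg hGM' pG pM).factorization q) '' sPrimes) with hCdef
    have hC : ∀ pM ∈ sPrimes, (locDeg hGM' pG pM).factorization q ≤ C := fun pM h =>
      le_csSup (Set.Finite.bddAbove (hfinP.image _)) ⟨pM, h, rfl⟩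
    set Sset : ∀ j : ℕ, Set (Ideal (𝓞 (M j))) := fun j =>
      {P | IsPrimeOf (M j) P ∧ LiesAbove (hmono (Nat.zero_le j)) P pG ∧
        (locDeg (hmono (Nat.zero_le j)) pG P).factorization q ≤ C} with hSset
    have hrestrict : ∀ {k j : ℕ} (h : k ≤ j), ∀ P ∈ Sset j,
        Ideal.comap (oMap (hmono h)) P ∈ Sset k := by
      intro k j h P hP
      haveI := hfd j; haveI := hfd k
      have h1 : IsPrimeOf (M k) (Ideal.comap (oMap (hmono h)) P) :=
        QB.comap_isPrimeOf (hmono h) hP.1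
      have h2 : LiesAbove (hmono (Nat.zero_le k)) (Ideal.comap (oMap (hmono h)) P) pG := by
        show Ideal.comap _ _ = _
        rw [Ideal.comap_comap, QB.oMap_comp]
        exact hP.2.1
      have hla : LiesAbove (hmono h) P (Ideal.comap (oMap (hmono h)) P) := rfl
      have e : (locDeg (hmono (Nat.zero_le j)) pG P).factorization q =
          (locDeg (hmono (Nat.zero_le k)) pG (Ideal.comap (oMap (hmono h)) P)).factorization q +
          (locDeg (hmono h) (Ideal.comap (oMap (hmono h)) P) P).factorization q :=
        QB.locDeg_fact (hmono (Nat.zero_le k)) (hmono h) hpG h1 hP.1 h2 hla q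
      refine ⟨h1, h2, ?_⟩
      have := hP.2.2
      omega
    have hnonempty : ∀ j, (Sset j).Nonempty := by
      intro j
      have hM'k : M' ≤ M (max j i0) := hM'le.trans (hmono (le_max_right j i0))
      haveI := hfd (max j i0)
      obtain ⟨pM, hpM, hpMab, pK, hpK, hpKab, hndvd⟩ := hsel (M (max j i0)) hM'k (hfd _)
      have habove : LiesAbove (hmono (Nat.zero_le (max j i0))) pK pG :=
        QB.liesAbove_trans hpMab hpKab
      have hb : (locDeg (hmono (Nat.zero_le (max j i0))) pG pK).factorization q ≤ C := by
        have e : (locDeg (hmono (Nat.zero_le (max j i0))) pG pK).factorization q =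
            (locDeg hGM' pG pM).factorization q + (locDeg hM'k pM pK).factorization q :=
          QB.locDeg_fact hGM' hM'k hpG hpM hpK hpMab hpKab q
        have ez : (locDeg hM'k pM pK).factorization q = 0 :=
          Nat.factorization_eq_zero_of_not_dvd hndvd
        rw [e, ez, add_zero]
        exact hC pM ⟨hpM, hpMab⟩
      exact ⟨Ideal.comap (oMap (hmono (le_max_left j i0))) pK,
        hrestrict (le_max_left j i0) pK ⟨hpK, habove, hb⟩⟩
    have hfinS : ∀ j, (Sset j).Finite := by
      intro j
      haveI := hfd j
      exact (QB.finite_setOf_liesAbove (hmono (Nat.zero_le j)) hpG.2).subset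
        (fun P hP => ⟨hP.1, hP.2.1⟩)
    let F : ℕᵒᵖ ⥤ Type _ :=
      { obj := fun j => ↥(Sset j.unop)
        map := fun {j k} f => TypeCat.ofHom (fun P =>
          ⟨Ideal.comap (oMap (hmono (leOfHom f.unop))) P.1, hrestrict (leOfHom f.unop) P.1 P.2⟩)
        map_id := by
          intro j
          ext1
          ext1
          funext P
          apply Subtype.ext
          show Ideal.comap _ _ = P.1
          rw [QB.oMap_id, Ideal.comap_id]
        map_comp := by
          intro j k l f g
          ext1
          ext1
          funext P
          apply Subtype.ext
          show Ideal.comap (oMap (hmono (leOfHom (f ≫ g).unop))) (P : Ideal _)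
              = Ideal.comap (oMap (hmono (leOfHom g.unop)))
                (Ideal.comap (oMap (hmono (leOfHom f.unop))) (P : Ideal _))
          rw [Ideal.comap_comap, QB.oMap_comp] }
    haveI : ∀ j : ℕᵒᵖ, Finite (F.obj j) := fun j => (hfinS j.unop).to_subtype
    haveI : ∀ j : ℕᵒᵖ, Nonempty (F.obj j) := fun j => (hnonempty j.unop).to_subtype
    obtain ⟨sec, hsec⟩ := nonempty_sections_of_finite_inverse_system F
    have hcomp : ∀ {j k : ℕ} (h : j ≤ k),
        Ideal.comap (oMap (hmono h)) (sec (op k)).1 = (sec (op j)).1 := by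
      intro j k h
      exact congrArg Subtype.val (hsec ((homOfLE h).op))
    refine ⟨fun j => (sec (op j)).1, ?_, fun j => (sec (op j)).2.1,
      fun j => hcomp (Nat.le_succ j), ?_⟩
    · have h0 := (sec (op 0)).2.2.1
      show _ = pG
      rw [show pG = Ideal.comap (oMap (hmono (Nat.zero_le 0))) (sec (op 0)).1 from h0.symm,
        QB.oMap_id, Ideal.comap_id]
    · set a : ℕ → ℕ :=
        fun j => (locDeg (hmono (Nat.zero_le j)) pG (sec (op j)).1).factorization q with ha
      have hmonoa : Monotone a := by
        intro j k h
        haveI := hfd j; haveI := hfd k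
        have e : a k = a j +
            (locDeg (hmono h) (sec (op j)).1 (sec (op k)).1).factorization q :=
          QB.locDeg_fact (hmono (Nat.zero_le j)) (hmono h) hpG (sec (op j)).2.1
            (sec (op k)).2.1 (sec (op j)).2.2.1 (hcomp h) q
        omega
      have hbdd : ∀ j, a j ≤ C := fun j => (sec (op j)).2.2.2
      have hmem : sSup (Set.range a) ∈ Set.range a :=
        Nat.sSup_mem ⟨a 0, ⟨0, rfl⟩⟩ ⟨C, by rintro _ ⟨j, rfl⟩; exact hbdd j⟩
      obtain ⟨i, hi⟩ := hmem
      refine ⟨i, fun j hj => le_antisymm ?_ (hmonoa hj)⟩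
      have h1 : a j ≤ sSup (Set.range a) :=
        le_csSup ⟨C, by rintro _ ⟨j', rfl⟩; exact hbdd j'⟩ ⟨j, rfl⟩
      rw [← hi] at h1
      exact h1
  · -- path exists → q-bounded
    rintro ⟨P, hP0, hPprime, hPcompat, i, hstab⟩ hU
    have hpath : ∀ {i' j : ℕ} (h : i' ≤ j), LiesAbove (hmono h) (P j) (P i') := by
      intro i' j h
      induction j, h using Nat.le_induction with
      | base => exact QB.liesAbove_refl _ _
      | succ n hn ih => exact QB.liesAbove_trans ih (hPcompat n)
    haveI := hfd i
    obtain ⟨K, hMK, hKfd, hH⟩ := hU (M i) (hmono (Nat.zero_le i)) (hfd i)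
    haveI := hKfd
    obtain ⟨j0, hKle⟩ := QB.exists_le_of_fd M hmono hunion K
    have hij : i ≤ max i j0 := le_max_left _ _
    set j := max i j0 with hj
    haveI := hfd j
    have hKj : K ≤ M j := hKle.trans (hmono (le_max_right i j0))
    set pK := Ideal.comap (oMap hKj) (P j) with hpK
    have hpKprime : IsPrimeOf K pK := QB.comap_isPrimeOf hKj (hPprime j)
    have hPji : LiesAbove (hmono hij) (P j) (P i) := hpath hij
    have hpKabove : LiesAbove hMK pK (P i) := by
      show Ideal.comap _ _ = _
      rw [Ideal.comap_comap, QB.oMap_comp]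
      exact hPji
    have hPiG : LiesAbove (hmono (Nat.zero_le i)) (P i) pG := by
      rw [← hP0]
      exact hpath (Nat.zero_le i)
    have hdvd : q ∣ locDeg hMK (P i) pK :=
      hH (P i) (hPprime i) hPiG pK hpKprime hpKabove
    have hlaK : LiesAbove hKj (P j) pK := rfl
    have e1 : (locDeg (hmono (Nat.zero_le j)) pG (P j)).factorization q =
        (locDeg (hmono (Nat.zero_le i)) pG (P i)).factorization q +
        (locDeg (hmono hij) (P i) (P j)).factorization q :=
      QB.locDeg_fact (hmono (Nat.zero_le i)) (hmono hij) hpG (hPprime i) (hPprime j)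
        hPiG hPji q
    have e2 : (locDeg (hmono hij) (P i) (P j)).factorization q =
        (locDeg hMK (P i) pK).factorization q + (locDeg hKj pK (P j)).factorization q :=
      QB.locDeg_fact hMK hKj (hPprime i) hpKprime (hPprime j) hpKabove hlaK q
    have hpos : 0 < (locDeg hMK (P i) pK).factorization q :=
      hq.factorization_pos_of_dvd (QB.locDeg_ne_zero hMK (hPprime i) hpKprime hpKabove) hdvd
    have := hstab j hij
    omega
end

section
/- Let N/K be an extension of number fields of degree n, let 𝔔 be a prime of K, and let 𝔮_1, …, 𝔮_m be all the primes of N lying above 𝔔. Let u ∈ N satisfy ord_{𝔮_j}(u) ≥ 0 for all j = 1, …, m. Suppose there exists a sequence of pairs (k_i, y_i), i = 1, 2, 3, …, with k_i positive integers, k_{i+1} > k_i, and y_i ∈ K with ord_{𝔮_j}(y_i) ≥ 0 for all i and j, such that ord_{𝔮_j}(u − y_i) > k_i for all i and j. Then u ∈ K. -/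
open IsDedekindDomain NumberField

open Multiplicative

namespace WVM

open IsDedekindDomain.HeightOneSpectrum

open scoped Classical

set_option linter.unusedSectionVars false

variable {R : Type*} [CommRing R] [IsDedekindDomain R]

/-- The multiplicity of the height-one prime `v` in the factorization of the ideal `I`. -/
noncomputable def cnt (v : HeightOneSpectrum R) (I : Ideal R) : ℕ :=
  (Associates.mk v.asIdeal).count (Associates.mk I).factors

lemma cnt_ne_zero_iff (v : HeightOneSpectrum R) (I : Ideal R) (hI : I ≠ ⊥) :
    cnt v I ≠ 0 ↔ v.asIdeal ∣ I :=
  Associates.count_ne_zero_iff_dvd hI v.irreducible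

lemma cnt_top (v : HeightOneSpectrum R) : cnt v (⊤ : Ideal R) = 0 := by
  by_contra h
  have h1 := (cnt_ne_zero_iff v ⊤ top_ne_bot).mp h
  exact v.isPrime.ne_top (top_le_iff.mp (Ideal.le_of_dvd h1))

lemma cnt_mul (v : HeightOneSpectrum R) {I J : Ideal R} (hI : I ≠ ⊥) (hJ : J ≠ ⊥) :
    cnt v (I * J) = cnt v I + cnt v J := by
  unfold cnt
  rw [← Associates.mk_mul_mk,
    Associates.count_mul (Associates.mk_ne_zero.mpr hI) (Associates.mk_ne_zero.mpr hJ)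
      v.associates_irreducible]

lemma cnt_self (v : HeightOneSpectrum R) : cnt v v.asIdeal = 1 :=
  Associates.count_self v.associates_irreducible

lemma cnt_eq_zero_of_ne {v q : HeightOneSpectrum R} (h : v ≠ q) : cnt v q.asIdeal = 0 := by
  refine Associates.count_eq_zero_of_ne v.associates_irreducible q.associates_irreducible ?_
  intro he
  apply h
  have : v.asIdeal = q.asIdeal := associated_iff_eq.mp (Associates.mk_eq_mk_iff_associated.mp he)
  cases v; cases q; simpa using this

variable {T : Type*} [CommRing T] [IsDedekindDomain T]

lemma cnt_map (φ : R →+* T) (hφ : Function.Injective φ)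
    (W : HeightOneSpectrum T) (w : HeightOneSpectrum R) (hw : W.asIdeal.comap φ = w.asIdeal)
    (I : Ideal R) (hI : I ≠ ⊥) :
    cnt W (I.map φ) = cnt W (w.asIdeal.map φ) * cnt w I := by
  revert hI
  refine UniqueFactorizationMonoid.induction_on_prime I ?_ ?_ ?_
  · intro h; exact absurd rfl h
  · intro J hJ _
    rw [Ideal.isUnit_iff] at hJ; subst hJ
    rw [Ideal.map_top, cnt_top, cnt_top, mul_zero]
  · intro J q hJ hq ih _
    have hqI : q.IsPrime := Ideal.isPrime_of_prime hq
    have hqb : q ≠ ⊥ := hq.ne_zero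
    have hmapq : q.map φ ≠ ⊥ := fun h =>
      hqb (by rwa [Ideal.map_eq_bot_iff_of_injective hφ] at h)
    have hmapJ : J.map φ ≠ ⊥ := fun h =>
      hJ (by rwa [Ideal.map_eq_bot_iff_of_injective hφ] at h)
    rw [Ideal.map_mul, cnt_mul W hmapq hmapJ, cnt_mul w hqb hJ, ih hJ, mul_add]
    congr 1
    set q' : HeightOneSpectrum R := ⟨q, hqI, hqb⟩ with hq'
    by_cases hqw : q' = w
    · have : q = w.asIdeal := by rw [← hqw]
      subst this
      rw [cnt_self, mul_one]
    · have h0 : cnt w q = 0 := cnt_eq_zero_of_ne (fun h => hqw h.symm)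
      rw [h0, mul_zero]
      by_contra h
      have hdvd := (cnt_ne_zero_iff W _ hmapq).mp h
      have hle : q ≤ W.asIdeal.comap φ := Ideal.map_le_iff_le_comap.mp (Ideal.le_of_dvd hdvd)
      rw [hw] at hle
      exact hqw (by
        have : q = w.asIdeal := q'.isMaximal.eq_of_le w.isPrime.ne_top hle
        cases w; simpa [hq', HeightOneSpectrum.mk.injEq] using this)

lemma one_le_e (φ : R →+* T) (hφ : Function.Injective φ)
    (W : HeightOneSpectrum T) (w : HeightOneSpectrum R) (hw : W.asIdeal.comap φ = w.asIdeal) :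
    1 ≤ cnt W (w.asIdeal.map φ) := by
  have hmap : w.asIdeal.map φ ≠ ⊥ := fun h =>
    w.ne_bot (by rwa [Ideal.map_eq_bot_iff_of_injective hφ] at h)
  exact Nat.one_le_iff_ne_zero.mpr <| (cnt_ne_zero_iff W _ hmap).mpr <|
    Ideal.dvd_iff_le.mpr (Ideal.map_le_iff_le_comap.mpr hw.ge)

lemma span_map (φ : R →+* T) (r : R) :
    Ideal.span {φ r} = (Ideal.span {r}).map φ := by
  rw [Ideal.map_span, Set.image_singleton]

lemma intValuationDef_eq (v : HeightOneSpectrum R) {r : R} (hr : r ≠ 0) :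
    v.intValuationDef r = ↑(ofAdd (-(cnt v (Ideal.span {r}) : ℤ))) :=
  v.intValuationDef_if_neg hr

variable {FR : Type*} [Field FR] [Algebra R FR] [IsFractionRing R FR]
variable {FT : Type*} [Field FT] [Algebra T FT] [IsFractionRing T FT]

lemma valuation_div_le_iff (v : HeightOneSpectrum R) {a b : R} (ha : a ≠ 0) (hb : b ≠ 0)
    (n : ℤ) :
    v.valuation FR (algebraMap R FR a / algebraMap R FR b) ≤ ↑(ofAdd (-n)) ↔
      n + (cnt v (Ideal.span {b}) : ℤ) ≤ (cnt v (Ideal.span {a}) : ℤ) := by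
  rw [map_div₀, valuation_of_algebraMap, valuation_of_algebraMap, intValuation_apply,
    intValuation_apply, intValuationDef_eq v ha, intValuationDef_eq v hb, ← WithZero.coe_div,
    ← ofAdd_sub, WithZero.coe_le_coe, ofAdd_le]
  omega

/-- The key comparison: if a nonzero element of `FR` has `w`-adic valuation at most
`exp(-n)`, then its image in `FT` has `W`-adic valuation at most `exp(-n)`, for any
height-one prime `W` lying over `w`. -/
lemma valuation_le_of_map (φ : R →+* T) (hφ : Function.Injective φ) (ι : FR →+* FT)
    (hcomm : ∀ r : R, ι (algebraMap R FR r) = algebraMap T FT (φ r))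
    (W : HeightOneSpectrum T) (w : HeightOneSpectrum R) (hw : W.asIdeal.comap φ = w.asIdeal)
    (x : FR) (hx : x ≠ 0) (n : ℕ)
    (h : w.valuation FR x ≤ ↑(ofAdd (-(n : ℤ)))) :
    W.valuation FT (ι x) ≤ ↑(ofAdd (-(n : ℤ))) := by
  obtain ⟨a, b, hb, rfl⟩ := IsFractionRing.div_surjective (A := R) x
  have hb0 : b ≠ 0 := nonZeroDivisors.ne_zero hb
  have ha0 : a ≠ 0 := by
    rintro rfl
    simp at hx
  have hιx : ι (algebraMap R FR a / algebraMap R FR b) =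
      algebraMap T FT (φ a) / algebraMap T FT (φ b) := by
    rw [map_div₀, hcomm, hcomm]
  have hφa : φ a ≠ 0 := fun h' => ha0 (hφ (by simpa using h'))
  have hφb : φ b ≠ 0 := fun h' => hb0 (hφ (by simpa using h'))
  have hsa : Ideal.span ({a} : Set R) ≠ ⊥ := by simpa using ha0
  have hsb : Ideal.span ({b} : Set R) ≠ ⊥ := by simpa using hb0
  rw [valuation_div_le_iff w ha0 hb0] at h
  rw [hιx, valuation_div_le_iff W hφa hφb]
  rw [span_map, span_map, cnt_map φ hφ W w hw (Ideal.span {a}) hsa,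
    cnt_map φ hφ W w hw (Ideal.span {b}) hsb]
  have he := one_le_e φ hφ W w hw
  set e := cnt W (w.asIdeal.map φ)
  set A := cnt w (Ideal.span {a})
  set B := cnt w (Ideal.span {b})
  push_cast
  nlinarith [h, he]

lemma valuation_eq_ofAdd {K : Type*} [Field K] [NumberField K]
    (v : HeightOneSpectrum (𝓞 K)) {x : K} (hx : x ≠ 0) :
    v.valuation K x = ↑(ofAdd (- ordv v x)) := by
  rw [ordv, dif_neg hx, neg_neg, ofAdd_toAdd, WithZero.coe_unzero]

lemma valuation_le_of_ordv {K : Type*} [Field K] [NumberField K]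
    (v : HeightOneSpectrum (𝓞 K)) {x : K} (hx : x ≠ 0) {m : ℕ}
    (h : (m : ℤ) < ordv v x) :
    v.valuation K x ≤ ↑(ofAdd (-((m + 1 : ℕ) : ℤ))) := by
  rw [valuation_eq_ofAdd v hx, WithZero.coe_le_coe, ofAdd_le]
  push_cast
  omega

/-- The comap of a height-one prime along a ring homomorphism, given that it is nonzero. -/
def comapHOS {R T : Type*} [CommRing R] [IsDomain R] [CommRing T] (φ : R →+* T)
    (W : IsDedekindDomain.HeightOneSpectrum T) (h : W.asIdeal.comap φ ≠ ⊥) :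
    IsDedekindDomain.HeightOneSpectrum R :=
  ⟨W.asIdeal.comap φ, W.isPrime.comap φ, h⟩

end WVM

open WVM

/-- Proposition (the weak vertical method): let `N/K` be an extension of number fields, `𝔔`
a prime of `K`, and `u ∈ N` integral at all primes of `N` above `𝔔`. If there is a sequence
`(k_i, y_i)` with `k_i` strictly increasing positive integers and `y_i ∈ K` integral at all
primes above `𝔔`, such that `ord_w(u - y_i) > k_i` at every prime `w` of `N` above `𝔔`,
then `u ∈ K`. -/
theorem weak_vertical_method
    (K N : Type*) [Field K] [Field N] [NumberField K] [NumberField N]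
    [Algebra K N] [FiniteDimensional K N]
    (𝔔 : HeightOneSpectrum (𝓞 K))
    (u : N)
    (hu : ∀ w : HeightOneSpectrum (𝓞 N),
      w.asIdeal.comap (algebraMap (𝓞 K) (𝓞 N)) = 𝔔.asIdeal → 0 ≤ ordv w u)
    (k : ℕ → ℕ) (hkpos : ∀ i, 1 ≤ k i) (hkmono : StrictMono k)
    (y : ℕ → K)
    (hy : ∀ i, ∀ w : HeightOneSpectrum (𝓞 N),
      w.asIdeal.comap (algebraMap (𝓞 K) (𝓞 N)) = 𝔔.asIdeal →
        0 ≤ ordv w (algebraMap K N (y i)))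
    (hclose : ∀ i, ∀ w : HeightOneSpectrum (𝓞 N),
      w.asIdeal.comap (algebraMap (𝓞 K) (𝓞 N)) = 𝔔.asIdeal →
        u - algebraMap K N (y i) = 0 ∨ (k i : ℤ) < ordv w (u - algebraMap K N (y i))) :
    u ∈ (algebraMap K N).range := by
  classical
  by_cases hex : ∃ i, u - algebraMap K N (y i) = 0
  · obtain ⟨i, hi⟩ := hex
    exact ⟨y i, (sub_eq_zero.mp hi).symm⟩
  push_neg at hex
  set A := AlgebraicClosure N
  set L := IntermediateField.normalClosure K N A with hL
  haveI : FiniteDimensional K L := normalClosure.is_finiteDimensional K N A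
  haveI : NumberField L := NumberField.of_module_finite (K := K) (L := L)
  haveI : IsGalois K L := ⟨⟩
  have hNL : Function.Injective (algebraMap N L) := (algebraMap N L).injective
  -- injectivity of the maps between rings of integers
  have hφNL : Function.Injective (algebraMap (𝓞 N) (𝓞 L)) := by
    intro a b hab
    have h1 := congrArg (algebraMap (𝓞 L) L) hab
    rw [← IsScalarTower.algebraMap_apply, ← IsScalarTower.algebraMap_apply,
      IsScalarTower.algebraMap_apply (𝓞 N) N L, IsScalarTower.algebraMap_apply (𝓞 N) N L] at h1
    exact NumberField.RingOfIntegers.coe_injective (hNL h1)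
  have hφKL : Function.Injective (algebraMap (𝓞 K) (𝓞 L)) := by
    intro a b hab
    have h1 := congrArg (algebraMap (𝓞 L) L) hab
    rw [← IsScalarTower.algebraMap_apply, ← IsScalarTower.algebraMap_apply,
      IsScalarTower.algebraMap_apply (𝓞 K) K L, IsScalarTower.algebraMap_apply (𝓞 K) K L] at h1
    exact NumberField.RingOfIntegers.coe_injective ((algebraMap K L).injective h1)
  haveI : Algebra.IsIntegral (𝓞 N) (𝓞 L) :=
    ⟨fun x => IsIntegralClosure.isIntegral (𝓞 N) L x⟩
  haveI : Algebra.IsIntegral (𝓞 K) (𝓞 L) :=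
    ⟨fun x => IsIntegralClosure.isIntegral (𝓞 K) L x⟩
  -- a prime of L above 𝔔
  obtain ⟨P, -, hPprime, hPcomap⟩ :=
    Ideal.exists_ideal_over_prime_of_isIntegral 𝔔.asIdeal (⊥ : Ideal (𝓞 L)) (by
      rw [← RingHom.ker_eq_comap_bot, (RingHom.injective_iff_ker_eq_bot _).mp hφKL]
      exact bot_le)
  haveI := hPprime
  have hPbot : P ≠ ⊥ := by
    rintro rfl
    refine 𝔔.ne_bot ?_
    rw [← hPcomap, ← RingHom.ker_eq_comap_bot, (RingHom.injective_iff_ker_eq_bot _).mp hφKL]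
  set W : HeightOneSpectrum (𝓞 L) := ⟨P, hPprime, hPbot⟩ with hW
  -- the main estimate, for every prime of L above 𝔔
  have main : ∀ W' : HeightOneSpectrum (𝓞 L),
      W'.asIdeal.comap (algebraMap (𝓞 K) (𝓞 L)) = 𝔔.asIdeal → ∀ i : ℕ,
      W'.valuation L (algebraMap N L (u - algebraMap K N (y i))) ≤
        ↑(ofAdd (-((k i + 1 : ℕ) : ℤ))) := by
    intro W' hW' i
    have hcnb : W'.asIdeal.comap (algebraMap (𝓞 N) (𝓞 L)) ≠ ⊥ := by
      obtain ⟨t, htW, ht0⟩ := Submodule.exists_mem_ne_zero_of_ne_bot W'.ne_bot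
      exact Ideal.comap_ne_bot_of_integral_mem ht0 htW (Algebra.IsIntegral.isIntegral t)
    set w' := comapHOS (algebraMap (𝓞 N) (𝓞 L)) W' hcnb with hw'
    have hw'Q : w'.asIdeal.comap (algebraMap (𝓞 K) (𝓞 N)) = 𝔔.asIdeal := by
      show (W'.asIdeal.comap (algebraMap (𝓞 N) (𝓞 L))).comap (algebraMap (𝓞 K) (𝓞 N)) =
        𝔔.asIdeal
      rw [Ideal.comap_comap, ← IsScalarTower.algebraMap_eq]
      exact hW'
    have hval := valuation_le_of_ordv w' (hex i) ((hclose i w' hw'Q).resolve_left (hex i))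
    exact valuation_le_of_map (algebraMap (𝓞 N) (𝓞 L)) hφNL (algebraMap N L)
      (fun r => by rw [← IsScalarTower.algebraMap_apply, ← IsScalarTower.algebraMap_apply])
      W' w' rfl _ (hex i) (k i + 1) hval
  -- all K-automorphisms of L fix the image of u
  suffices hfix : ∀ σ : L ≃ₐ[K] L, σ (algebraMap N L u) = algebraMap N L u by
    have hmem : algebraMap N L u ∈
        IntermediateField.fixedField (⊤ : Subgroup (L ≃ₐ[K] L)) := by
      rintro ⟨σ, -⟩
      exact hfix σ
    have htfae := IsGalois.tfae (F := K) (E := ↥L)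
    have hbot : IsGalois K ↥L ↔
        IntermediateField.fixedField (⊤ : Subgroup (↥L ≃ₐ[K] ↥L)) = ⊥ := htfae.out 0 1
    rw [hbot.mp inferInstance] at hmem
    obtain ⟨c, hc⟩ := IntermediateField.mem_bot.mp hmem
    refine ⟨c, hNL ?_⟩
    rw [← hc, ← IsScalarTower.algebraMap_apply]
  intro σ
  set ψ : 𝓞 L ≃+* 𝓞 L := RingOfIntegers.mapRingEquiv σ with hψ
  have hψcoe : ∀ r : 𝓞 L, algebraMap (𝓞 L) L (ψ r) = σ (algebraMap (𝓞 L) L r) := fun r => rfl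
  have hψbot : W.asIdeal.comap (ψ : 𝓞 L →+* 𝓞 L) ≠ ⊥ := by
    intro h
    have h1 := Ideal.map_comap_of_surjective (ψ : 𝓞 L →+* 𝓞 L) ψ.surjective W.asIdeal
    rw [h, Ideal.map_bot] at h1
    exact W.ne_bot h1.symm
  set W₂ := comapHOS (ψ : 𝓞 L →+* 𝓞 L) W hψbot with hW₂
  have hW₂Q : W₂.asIdeal.comap (algebraMap (𝓞 K) (𝓞 L)) = 𝔔.asIdeal := by
    have hfixK : ∀ c : 𝓞 K, ψ (algebraMap (𝓞 K) (𝓞 L) c) = algebraMap (𝓞 K) (𝓞 L) c := by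
      intro c
      apply NumberField.RingOfIntegers.coe_injective
      rw [hψcoe, ← IsScalarTower.algebraMap_apply,
        IsScalarTower.algebraMap_apply (𝓞 K) K ↥L, AlgEquiv.commutes]
    show (W.asIdeal.comap (ψ : 𝓞 L →+* 𝓞 L)).comap (algebraMap (𝓞 K) (𝓞 L)) = 𝔔.asIdeal
    rw [Ideal.comap_comap]
    have h2 : (ψ : 𝓞 L →+* 𝓞 L).comp (algebraMap (𝓞 K) (𝓞 L)) = algebraMap (𝓞 K) (𝓞 L) :=
      RingHom.ext hfixK
    rw [h2]
    exact hPcomap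
  set ε := σ (algebraMap N L u) - algebraMap N L u with hε
  have hεle : ∀ i : ℕ, W.valuation L ε ≤ ↑(ofAdd (-((k i + 1 : ℕ) : ℤ))) := by
    intro i
    set x := u - algebraMap K N (y i) with hxdef
    have hx0 : algebraMap N L x ≠ 0 := fun h => hex i (hNL (by rw [h, map_zero]))
    have h2 : W.valuation L (algebraMap N L x) ≤ ↑(ofAdd (-((k i + 1 : ℕ) : ℤ))) :=
      main W hPcomap i
    have h4 : W₂.valuation L (algebraMap N L x) ≤ ↑(ofAdd (-((k i + 1 : ℕ) : ℤ))) :=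
      main W₂ hW₂Q i
    have h5 : W.valuation L (σ (algebraMap N L x)) ≤ ↑(ofAdd (-((k i + 1 : ℕ) : ℤ))) :=
      valuation_le_of_map (ψ : 𝓞 L →+* 𝓞 L) ψ.injective (σ : L →+* L)
        (fun r => (hψcoe r).symm) W W₂ rfl _ hx0 (k i + 1) h4
    have hεeq : ε = σ (algebraMap N L x) - algebraMap N L x := by
      rw [hε, hxdef, map_sub, map_sub, ← IsScalarTower.algebraMap_apply K N ↥L,
        AlgEquiv.commutes]
      ring
    rw [hεeq]
    exact le_trans ((W.valuation L).map_sub _ _) (max_le h5 h2)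
  have hε0 : ε = 0 := by
    by_contra hne
    have hval := valuation_eq_ofAdd W hne
    have hord : ∀ i : ℕ, ((k i + 1 : ℕ) : ℤ) ≤ ordv W ε := by
      intro i
      have h6 := hεle i
      rw [hval, WithZero.coe_le_coe, ofAdd_le] at h6
      omega
    have hki : ∀ i : ℕ, (i : ℤ) ≤ (k i : ℤ) := fun i => by exact_mod_cast hkmono.le_apply
    have h7 := hord ((ordv W ε).toNat)
    have h8 := hki ((ordv W ε).toNat)
    push_cast at h7
    omega
  exact sub_eq_zero.mp hε0
end
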